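/- Let Ω ⊂ ℝ^d be a bounded domain, let f : Ω → ℝ be Lipschitz with constant L, i.e. |f(x) − f(y)| ≤ L|x − y| for all x, y, and let g ∈ L^q(Ω), 1 ≤ q ≤ ∞. Let η_ε be a standard mollifier at scale ε and write v^ε = v * η_ε. Then there is a constant C > 0 independent of ε, f and g such that ‖(fg)^ε − f g^ε‖_{L^q} ≤ C ε L ‖g‖_{L^q(Ω)}; in particular, when q < ∞, (fg)^ε − f g^ε → 0 in L^q as ε → 0. -/

import Mathlib

open MeasureTheory Metric Set Filter
open scoped ENNReal Topology

noncomputable section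

abbrev Euc (d : ℕ) := EuclideanSpace ℝ (Fin d)

/-- `i`-th standard basis vector of `ℝ^d`. -/
def e (d : ℕ) (i : Fin d) : Euc d := EuclideanSpace.single i 1

/-- A standard mollifier: smooth, nonnegative, unit mass, supported in the unit ball. -/
def IsStdMollifier {d : ℕ} (η : Euc d → ℝ) : Prop :=
  ContDiff ℝ (⊤ : ℕ∞) η ∧ (∀ x, 0 ≤ η x) ∧ (∫ x, η x) = 1 ∧ tsupport η ⊆ closedBall 0 1

/-- The rescaled mollifier `η_ε(x) = ε^{-d} η(x/ε)`. -/
def mollScaled {d : ℕ} (η : Euc d → ℝ) (ε : ℝ) (x : Euc d) : ℝ :=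
  (ε ^ d)⁻¹ * η (ε⁻¹ • x)

/-- Mollification `f * η_ε`. -/
def moll {d : ℕ} {F : Type*} [NormedAddCommGroup F] [NormedSpace ℝ F]
    (η : Euc d → ℝ) (ε : ℝ) (f : Euc d → F) (x : Euc d) : F :=
  ∫ y, mollScaled η ε (x - y) • f y

section Aux

variable {d : ℕ} {η : Euc d → ℝ} {ε : ℝ}

lemma mollScaled_cont (hη : IsStdMollifier η) : Continuous (mollScaled η ε) :=
  continuous_const.mul (hη.1.continuous.comp (continuous_const_smul _))

lemma mollScaled_nonneg (hη : IsStdMollifier η) (hε : 0 < ε) (z : Euc d) :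
    0 ≤ mollScaled η ε z :=
  mul_nonneg (inv_nonneg.2 (pow_nonneg hε.le _)) (hη.2.1 _)

lemma mollScaled_eq_zero (hη : IsStdMollifier η) (hε : 0 < ε) {z : Euc d} (hz : ε < ‖z‖) :
    mollScaled η ε z = 0 := by
  have h1 : ε⁻¹ • z ∉ closedBall (0 : Euc d) 1 := by
    rw [mem_closedBall, dist_zero_right, norm_smul, norm_inv, Real.norm_eq_abs,
      abs_of_pos hε, not_le, ← inv_mul_cancel₀ hε.ne']
    exact mul_lt_mul_of_pos_left hz (inv_pos.2 hε)
  have h2 : η (ε⁻¹ • z) = 0 :=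
    image_eq_zero_of_notMem_tsupport fun h => h1 (hη.2.2.2 h)
  simp [mollScaled, h2]

lemma mollScaled_hcs (hη : IsStdMollifier η) (hε : 0 < ε) :
    HasCompactSupport (mollScaled η ε) := by
  refine HasCompactSupport.intro (isCompact_closedBall (0 : Euc d) ε) fun z hz => ?_
  rw [mem_closedBall, dist_zero_right, not_le] at hz
  exact mollScaled_eq_zero hη hε hz

lemma mollScaled_integrable (hη : IsStdMollifier η) (hε : 0 < ε) :
    Integrable (mollScaled η ε) :=
  (mollScaled_cont hη).integrable_of_hasCompactSupport (mollScaled_hcs hη hε)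

lemma mollScaled_integral (hη : IsStdMollifier η) (hε : 0 < ε) :
    ∫ z, mollScaled η ε z = 1 := by
  have hfr : Module.finrank ℝ (Euc d) = d := finrank_euclideanSpace_fin
  have h := Measure.integral_comp_smul (volume : Measure (Euc d)) η ε⁻¹
  rw [hfr] at h
  simp only [mollScaled]
  rw [integral_const_mul, h, hη.2.2.1, smul_eq_mul, mul_one, inv_pow, inv_inv,
    abs_of_pos (pow_pos hε d)]
  exact inv_mul_cancel₀ (pow_pos hε d).ne'

lemma mollScaled_lintegral (hη : IsStdMollifier η) (hε : 0 < ε) :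
    ∫⁻ z, ENNReal.ofReal (mollScaled η ε z) = 1 := by
  rw [← ofReal_integral_eq_lintegral_ofReal (mollScaled_integrable hη hε)
      (Filter.Eventually.of_forall (mollScaled_nonneg hη hε)), mollScaled_integral hη hε,
    ENNReal.ofReal_one]

lemma jensen_conv {k H : Euc d → ℝ≥0∞} (hk : Measurable k) (hH : Measurable H)
    (hk1 : ∀ x : Euc d, (∫⁻ y, k (x - y)) = 1) {p : ℝ} (hp : 1 ≤ p) (x : Euc d) :
    (∫⁻ y, k (x - y) * H y) ^ p ≤ ∫⁻ y, k (x - y) * H y ^ p := by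
  rcases eq_or_lt_of_le hp with hp1 | hp1
  · simp only [← hp1, ENNReal.rpow_one]
    exact le_rfl
  · have hpq : (Real.conjExponent p).HolderConjugate p :=
      (Real.HolderConjugate.conjExponent hp1).symm
    set p' := Real.conjExponent p with hp'def
    have hp'0 : p' ≠ 0 := hpq.ne_zero
    have hp0 : (0:ℝ) < p := lt_trans one_pos hp1
    have hkx : Measurable fun y => k (x - y) := hk.comp (measurable_const.sub measurable_id)
    have e1 : (∫⁻ y, (k (x - y) ^ (1/p')) ^ p') = 1 := by
      have heq : ∀ y : Euc d, (k (x - y) ^ (1/p')) ^ p' = k (x - y) := fun y => by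
        rw [← ENNReal.rpow_mul, one_div, inv_mul_cancel₀ hp'0, ENNReal.rpow_one]
      rw [lintegral_congr heq, hk1 x]
    have e2 : (∫⁻ y, (k (x - y) ^ (1/p) * H y) ^ p) = ∫⁻ y, k (x - y) * H y ^ p :=
      lintegral_congr fun y => by
        rw [ENNReal.mul_rpow_of_nonneg _ _ hp0.le, ← ENNReal.rpow_mul, one_div,
          inv_mul_cancel₀ hp0.ne', ENNReal.rpow_one]
    have key : (∫⁻ y, k (x - y) * H y) ≤ (∫⁻ y, k (x - y) * H y ^ p) ^ (1/p) := by
      have hsplit : ∀ y : Euc d, k (x - y) * H y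
          = (k (x - y) ^ (1/p')) * (k (x - y) ^ (1/p) * H y) := fun y => by
        rw [← mul_assoc, ← ENNReal.rpow_add_of_nonneg _ _ hpq.one_div_nonneg hpq.symm.one_div_nonneg]
        rw [one_div, one_div, hpq.inv_add_inv_eq_one, ENNReal.rpow_one]
      calc (∫⁻ y, k (x - y) * H y)
          = ∫⁻ y, (fun y => k (x - y) ^ (1/p')) y * (fun y => k (x - y) ^ (1/p) * H y) y :=
            lintegral_congr hsplit
        _ ≤ (∫⁻ y, (k (x - y) ^ (1/p')) ^ p') ^ (1/p')
              * (∫⁻ y, (k (x - y) ^ (1/p) * H y) ^ p) ^ (1/p) := by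
            refine ENNReal.lintegral_mul_le_Lp_mul_Lq volume hpq ?_ ?_
            · exact ((ENNReal.continuous_rpow_const.measurable).comp hkx).aemeasurable
            · exact (((ENNReal.continuous_rpow_const.measurable).comp hkx).mul hH).aemeasurable
        _ = (∫⁻ y, k (x - y) * H y ^ p) ^ (1/p) := by
            rw [e1, e2, ENNReal.one_rpow, one_mul]
    calc (∫⁻ y, k (x - y) * H y) ^ p
        ≤ ((∫⁻ y, k (x - y) * H y ^ p) ^ (1/p)) ^ p := ENNReal.rpow_le_rpow key hp0.le
      _ = ∫⁻ y, k (x - y) * H y ^ p := by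
          rw [← ENNReal.rpow_mul, one_div, inv_mul_cancel₀ hp0.ne', ENNReal.rpow_one]

lemma young_conv {k H : Euc d → ℝ≥0∞} (hk : Measurable k) (hH : Measurable H)
    (hkl : (∫⁻ z, k z) = 1) {p : ℝ} (hp : 1 ≤ p) :
    (∫⁻ x, (∫⁻ y, k (x - y) * H y) ^ p) ≤ ∫⁻ y, H y ^ p := by
  have hk1 : ∀ x : Euc d, (∫⁻ y, k (x - y)) = 1 := fun x => by
    rw [(Measure.measurePreserving_sub_left volume x).lintegral_comp hk]; exact hkl
  have hk2 : ∀ y : Euc d, (∫⁻ x, k (x - y)) = 1 := fun y => by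
    rw [(measurePreserving_sub_right volume y).lintegral_comp hk]; exact hkl
  have hHp : Measurable fun y => H y ^ p := (ENNReal.continuous_rpow_const.measurable).comp hH
  calc (∫⁻ x, (∫⁻ y, k (x - y) * H y) ^ p)
      ≤ ∫⁻ x, ∫⁻ y, k (x - y) * H y ^ p := lintegral_mono (jensen_conv hk hH hk1 hp)
    _ = ∫⁻ y, ∫⁻ x, k (x - y) * H y ^ p := lintegral_lintegral_swap
        (((hk.comp (measurable_fst.sub measurable_snd)).mul
          (hHp.comp measurable_snd)).aemeasurable)
    _ = ∫⁻ y, H y ^ p := by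
        refine lintegral_congr fun y => ?_
        have hm : Measurable fun x : Euc d => k (x - y) :=
          hk.comp (measurable_id.sub measurable_const)
        rw [lintegral_mul_const _ hm, hk2 y, one_mul]

end Aux

/-- **Lipschitz commutator estimate** (Remark 2.3, the case `α = 1`): if `f` is
Lipschitz on `Ω` with constant `L` and `g ∈ L^q(Ω)`, then
`‖(fg)^ε − f g^ε‖_{L^q} ≤ C ε L ‖g‖_{L^q(Ω)}` with `C` independent of `ε`, `f`
and `g`; in particular, when `q < ∞`, the commutator tends to `0` in `L^q` as
`ε → 0`. -/
theorem lipschitz_commutator {d : ℕ} (hd : 0 < d)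
    (Ω : Set (Euc d)) (hΩo : IsOpen Ω) (hΩb : Bornology.IsBounded Ω)
    (q : ℝ≥0∞) (hq : 1 ≤ q)
    (η : Euc d → ℝ) (hη : IsStdMollifier η) :
    ∃ C : ℝ, 0 < C ∧
      ∀ (L : ℝ) (f g : Euc d → ℝ), 0 ≤ L →
        (∀ x ∈ Ω, ∀ y ∈ Ω, |f x - f y| ≤ L * ‖x - y‖) →
        AEStronglyMeasurable f volume → AEStronglyMeasurable g volume →
        eLpNorm g q (volume.restrict Ω) < ⊤ →
        (∀ ε : ℝ, 0 < ε →
          eLpNorm (fun x => moll η ε (fun y => f y * g y) x - f x * moll η ε g x) q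
              (volume.restrict {x ∈ Ω | ε < Metric.infDist x Ωᶜ})
            ≤ ENNReal.ofReal (C * ε * L) * eLpNorm g q (volume.restrict Ω)) ∧
        (q ≠ ⊤ →
          Tendsto (fun ε : ℝ =>
              eLpNorm (fun x => moll η ε (fun y => f y * g y) x - f x * moll η ε g x) q
                (volume.restrict {x ∈ Ω | ε < Metric.infDist x Ωᶜ}))
            (𝓝[>] (0:ℝ)) (𝓝 0)) := by
  classical
  refine ⟨1, one_pos, ?_⟩
  intro L f g hL hLip hf hg hgq
  have hq0 : q ≠ 0 := (lt_of_lt_of_le zero_lt_one hq).ne'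
  obtain ⟨g', hg'm, hgg'⟩ : ∃ g', StronglyMeasurable g' ∧ g =ᵐ[volume] g' :=
    ⟨hg.mk g, hg.stronglyMeasurable_mk, hg.ae_eq_mk⟩
  haveI : IsFiniteMeasure (volume.restrict Ω) := by
    constructor
    rw [Measure.restrict_apply_univ]
    exact hΩb.measure_lt_top
  have hgΩint : IntegrableOn g Ω volume := by
    have hmem : MemLp g q (volume.restrict Ω) := ⟨hg.restrict, hgq⟩
    exact memLp_one_iff_integrable.mp (hmem.mono_exponent hq)
  have key : ∀ ε : ℝ, 0 < ε →
      eLpNorm (fun x => moll η ε (fun y => f y * g y) x - f x * moll η ε g x) q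
          (volume.restrict {x ∈ Ω | ε < Metric.infDist x Ωᶜ})
        ≤ ENNReal.ofReal (1 * ε * L) * eLpNorm g q (volume.restrict Ω) := by
    intro ε hε
    set S : Set (Euc d) := {x ∈ Ω | ε < Metric.infDist x Ωᶜ} with hSdef
    have hSm : MeasurableSet S := by
      have : S = Ω ∩ {x | ε < Metric.infDist x Ωᶜ} := rfl
      rw [this]
      exact hΩo.measurableSet.inter
        (isOpen_lt continuous_const (continuous_infDist_pt _)).measurableSet
    have hball : ∀ x ∈ S, closedBall x ε ⊆ Ω := by
      intro x hx y hy
      by_contra hyΩ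
      have h1 : Metric.infDist x Ωᶜ ≤ dist x y := infDist_le_dist_of_mem hyΩ
      have h2 : dist x y ≤ ε := by rw [dist_comm]; exact mem_closedBall.mp hy
      exact absurd hx.2 (not_lt.2 (h1.trans h2))
    set k : Euc d → ℝ≥0∞ := fun z => ENNReal.ofReal (mollScaled η ε z) with hkdef
    have hkm : Measurable k := ENNReal.measurable_ofReal.comp (mollScaled_cont hη).measurable
    have hkl : (∫⁻ z, k z) = 1 := mollScaled_lintegral hη hε
    set H : Euc d → ℝ≥0∞ := Ω.indicator fun y => (‖g' y‖₊ : ℝ≥0∞) with hHdef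
    have hHm : Measurable H := Measurable.indicator hg'm.measurable.enorm hΩo.measurableSet
    set T : Euc d → ℝ≥0∞ := fun x => ∫⁻ y, k (x - y) * H y with hTdef
    obtain ⟨Mk, hMk⟩ : ∃ Mk, ∀ z, ‖mollScaled η ε z‖ ≤ Mk :=
      (mollScaled_hcs hη hε).exists_bound_of_continuous (mollScaled_cont hη)
    -- integrability lemmas
    have hmolxy : ∀ x : Euc d,
        AEStronglyMeasurable (fun y => mollScaled η ε (x - y)) volume := fun x =>
      ((mollScaled_cont hη).comp (continuous_const.sub continuous_id)).aestronglyMeasurable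
    have hzero : ∀ x : Euc d, ∀ y ∉ closedBall x ε, mollScaled η ε (x - y) = 0 := by
      intro x y hy
      refine mollScaled_eq_zero hη hε ?_
      rw [mem_closedBall, not_le] at hy
      rwa [← dist_eq_norm, dist_comm]
    have hI2 : ∀ x ∈ S, Integrable (fun y => mollScaled η ε (x - y) * g y) volume := by
      intro x hx
      have hint : IntegrableOn (fun y => mollScaled η ε (x - y) * g y) (closedBall x ε) volume :=
        (hgΩint.mono_set (hball x hx)).bdd_mul ((hmolxy x).restrict)
          (Filter.Eventually.of_forall fun y => hMk _)
      have := hint.integrable_indicator measurableSet_closedBall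
      refine this.congr (Filter.Eventually.of_forall fun y => ?_)
      by_cases hy : y ∈ closedBall x ε
      · rw [Set.indicator_of_mem hy]
      · simp [Set.indicator_of_notMem hy, hzero x y hy]
    have hI1 : ∀ x ∈ S, Integrable (fun y => mollScaled η ε (x - y) * (f y * g y)) volume := by
      intro x hx
      have hxΩ : x ∈ Ω := hx.1
      have hbd : ∀ᵐ y ∂(volume.restrict (closedBall x ε)),
          ‖mollScaled η ε (x - y) * f y‖ ≤ Mk * (|f x| + L * ε) := by
        refine (ae_restrict_iff' measurableSet_closedBall).2 (Filter.Eventually.of_forall ?_)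
        intro y hy
        have hyΩ : y ∈ Ω := hball x hx hy
        have hfy : |f y| ≤ |f x| + L * ε := by
          have h1 : |f y - f x| ≤ L * ‖y - x‖ := hLip y hyΩ x hxΩ
          have h2 : ‖y - x‖ ≤ ε := by rw [← dist_eq_norm]; exact mem_closedBall.mp hy
          have h3 : |f y - f x| ≤ L * ε := h1.trans (mul_le_mul_of_nonneg_left h2 hL)
          calc |f y| = |f x + (f y - f x)| := by ring_nf
            _ ≤ |f x| + |f y - f x| := abs_add_le _ _
            _ ≤ |f x| + L * ε := by linarith
        rw [norm_mul]
        have hMk0 : 0 ≤ Mk := le_trans (norm_nonneg _) (hMk 0)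
        exact mul_le_mul (hMk _) (by simpa using hfy) (norm_nonneg _) hMk0
      have hint0 : Integrable (fun y => (mollScaled η ε (x - y) * f y) * g y)
          (volume.restrict (closedBall x ε)) :=
        (hgΩint.mono_set (hball x hx)).bdd_mul (((hmolxy x).restrict).mul hf.restrict) hbd
      have hint : IntegrableOn (fun y => mollScaled η ε (x - y) * (f y * g y))
          (closedBall x ε) volume :=
        hint0.congr (Filter.Eventually.of_forall fun y => by ring)
      have := hint.integrable_indicator measurableSet_closedBall
      refine this.congr (Filter.Eventually.of_forall fun y => ?_)
      by_cases hy : y ∈ closedBall x ε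
      · rw [Set.indicator_of_mem hy]
      · simp [Set.indicator_of_notMem hy, hzero x y hy]
    -- pointwise estimate
    have hpt : ∀ x ∈ S,
        (‖moll η ε (fun y => f y * g y) x - f x * moll η ε g x‖₊ : ℝ≥0∞)
          ≤ ENNReal.ofReal (L * ε) * T x := by
      intro x hx
      have hxΩ : x ∈ Ω := hx.1
      have hid : moll η ε (fun y => f y * g y) x - f x * moll η ε g x
          = ∫ y, mollScaled η ε (x - y) * ((f y - f x) * g y) := by
        simp only [moll, smul_eq_mul]
        rw [← integral_const_mul (f x) fun y => mollScaled η ε (x - y) * g y]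
        rw [← integral_sub (hI1 x hx) ((hI2 x hx).const_mul (f x))]
        congr 1
        funext y
        ring
      rw [hid]
      calc (‖∫ y, mollScaled η ε (x - y) * ((f y - f x) * g y)‖₊ : ℝ≥0∞)
          ≤ ∫⁻ y, ‖mollScaled η ε (x - y) * ((f y - f x) * g y)‖₊ :=
            enorm_integral_le_lintegral_enorm _
        _ ≤ ∫⁻ y, ENNReal.ofReal (L * ε)
              * (k (x - y) * Ω.indicator (fun y => (‖g y‖₊ : ℝ≥0∞)) y) := by
            refine lintegral_mono fun y => ?_
            by_cases hy : y ∈ closedBall x ε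
            · have hyΩ : y ∈ Ω := hball x hx hy
              rw [Set.indicator_of_mem hyΩ]
              have ha : (‖mollScaled η ε (x - y)‖₊ : ℝ≥0∞) = k (x - y) :=
                Real.enorm_eq_ofReal (mollScaled_nonneg hη hε _)
              have hb : (‖f y - f x‖₊ : ℝ≥0∞) ≤ ENNReal.ofReal (L * ε) := by
                have h1 : |f y - f x| ≤ L * ε := by
                  have h2 : ‖y - x‖ ≤ ε := by rw [← dist_eq_norm]; exact mem_closedBall.mp hy
                  exact (hLip y hyΩ x hxΩ).trans (mul_le_mul_of_nonneg_left h2 hL)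
                calc (‖f y - f x‖₊ : ℝ≥0∞) = ENNReal.ofReal |f y - f x| := by
                      rw [← Real.nnnorm_abs]
                      exact Real.enorm_eq_ofReal (abs_nonneg _)
                  _ ≤ ENNReal.ofReal (L * ε) := ENNReal.ofReal_le_ofReal h1
              calc (‖mollScaled η ε (x - y) * ((f y - f x) * g y)‖₊ : ℝ≥0∞)
                  = (‖mollScaled η ε (x - y)‖₊ : ℝ≥0∞)
                    * ((‖f y - f x‖₊ : ℝ≥0∞) * (‖g y‖₊ : ℝ≥0∞)) := by
                    rw [nnnorm_mul, nnnorm_mul]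
                    push_cast
                    ring
                _ ≤ k (x - y) * (ENNReal.ofReal (L * ε) * (‖g y‖₊ : ℝ≥0∞)) := by
                    rw [ha]
                    exact mul_le_mul_right (mul_le_mul_left hb _) _
                _ = ENNReal.ofReal (L * ε) * (k (x - y) * (‖g y‖₊ : ℝ≥0∞)) := by ring
            · rw [hzero x y hy]
              simp
        _ = ENNReal.ofReal (L * ε)
              * ∫⁻ y, k (x - y) * Ω.indicator (fun y => (‖g y‖₊ : ℝ≥0∞)) y :=
            lintegral_const_mul' _ _ ENNReal.ofReal_ne_top
        _ = ENNReal.ofReal (L * ε) * T x := by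
            congr 1
            refine lintegral_congr_ae ?_
            filter_upwards [hgg'] with y hy
            congr 1
            by_cases hyΩ : y ∈ Ω <;> simp [H, hyΩ, hy]
    -- the norm bound
    have hmain : eLpNorm (fun x => moll η ε (fun y => f y * g y) x - f x * moll η ε g x) q
        (volume.restrict S) ≤ ENNReal.ofReal (L * ε) * eLpNorm g q (volume.restrict Ω) := by
      rcases eq_or_ne q ⊤ with hqt | hqt
      · subst hqt
        have hk1 : ∀ x : Euc d, (∫⁻ y, k (x - y)) = 1 := fun x => by
          rw [(Measure.measurePreserving_sub_left volume x).lintegral_comp hkm]; exact hkl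
        set B : ℝ≥0∞ := eLpNorm g ⊤ (volume.restrict Ω) with hBdef
        have hae : ∀ᵐ y ∂(volume : Measure (Euc d)), H y ≤ B := by
          have h1 : ∀ᵐ y ∂(volume.restrict Ω), (‖g' y‖₊ : ℝ≥0∞) ≤ B := by
            have h2 := ENNReal.ae_le_essSup (μ := volume.restrict Ω)
              (fun y => (‖g y‖₊ : ℝ≥0∞))
            filter_upwards [h2, ae_restrict_of_ae hgg'] with y hy1 hy2
            rw [← hy2]
            refine hy1.trans ?_
            rw [hBdef, eLpNorm_exponent_top, eLpNormEssSup]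
            exact le_rfl
          have h3 := (ae_restrict_iff' hΩo.measurableSet).1 h1
          filter_upwards [h3] with y hy
          by_cases hyΩ : y ∈ Ω
          · rw [hHdef, Set.indicator_of_mem hyΩ]; exact hy hyΩ
          · rw [hHdef, Set.indicator_of_notMem hyΩ]; exact zero_le
        have hTB : ∀ x, T x ≤ B := by
          intro x
          calc T x ≤ ∫⁻ y, k (x - y) * B :=
              lintegral_mono_ae (hae.mono fun y hy => mul_le_mul_right hy _)
            _ = (∫⁻ y, k (x - y)) * B := by
              have hm : Measurable fun y : Euc d => k (x - y) :=
                hkm.comp (measurable_const.sub measurable_id)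
              exact lintegral_mul_const _ hm
            _ = B := by rw [hk1 x, one_mul]
        rw [eLpNorm_exponent_top, eLpNormEssSup]
        refine essSup_le_of_ae_le _ ?_
        refine (ae_restrict_iff' hSm).2 (Filter.Eventually.of_forall fun x hx => ?_)
        exact (hpt x hx).trans (mul_le_mul_right (hTB x) _)
      · have hp1 : (1:ℝ) ≤ q.toReal := by
          rw [← ENNReal.toReal_one]
          exact ENNReal.toReal_mono hqt hq
        set p : ℝ := q.toReal with hpdef
        have hp0 : (0:ℝ) < p := lt_of_lt_of_le one_pos hp1
        have hof_ne : ENNReal.ofReal (L * ε) ^ p ≠ ⊤ :=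
          ENNReal.rpow_ne_top_of_nonneg hp0.le ENNReal.ofReal_ne_top
        set u : Euc d → ℝ := fun x => moll η ε (fun y => f y * g y) x - f x * moll η ε g x
          with hudef
        calc eLpNorm u q (volume.restrict S)
            = (∫⁻ x in S, (‖u x‖₊ : ℝ≥0∞) ^ p) ^ (1/p) := by
              rw [eLpNorm_eq_lintegral_rpow_enorm_toReal hq0 hqt]
              rfl
          _ ≤ (∫⁻ x in S, (ENNReal.ofReal (L * ε) * T x) ^ p) ^ (1/p) := by
              refine ENNReal.rpow_le_rpow ?_ (by positivity)
              refine lintegral_mono_ae ?_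
              refine (ae_restrict_iff' hSm).2 (Filter.Eventually.of_forall fun x hx => ?_)
              exact ENNReal.rpow_le_rpow (hpt x hx) hp0.le
          _ ≤ (∫⁻ x, (ENNReal.ofReal (L * ε) * T x) ^ p) ^ (1/p) :=
              ENNReal.rpow_le_rpow (setLIntegral_le_lintegral _ _) (by positivity)
          _ = (ENNReal.ofReal (L * ε) ^ p * ∫⁻ x, T x ^ p) ^ (1/p) := by
              congr 1
              rw [← lintegral_const_mul' _ _ hof_ne]
              exact lintegral_congr fun x => ENNReal.mul_rpow_of_nonneg _ _ hp0.le
          _ ≤ (ENNReal.ofReal (L * ε) ^ p * ∫⁻ y, H y ^ p) ^ (1/p) := by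
              refine ENNReal.rpow_le_rpow (mul_le_mul_right ?_ _) (by positivity)
              exact young_conv hkm hHm hkl hp1
          _ = ENNReal.ofReal (L * ε) * (∫⁻ y, H y ^ p) ^ (1/p) := by
              rw [ENNReal.mul_rpow_of_nonneg _ _ (by positivity : (0:ℝ) ≤ 1/p),
                ← ENNReal.rpow_mul, mul_one_div, div_self hp0.ne', ENNReal.rpow_one]
          _ = ENNReal.ofReal (L * ε) * eLpNorm g q (volume.restrict Ω) := by
              congr 1
              have hind : (∫⁻ y, H y ^ p)
                  = ∫⁻ y in Ω, (‖g' y‖₊ : ℝ≥0∞) ^ p := by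
                rw [← lintegral_indicator hΩo.measurableSet]
                refine lintegral_congr fun y => ?_
                by_cases hyΩ : y ∈ Ω
                · rw [hHdef, Set.indicator_of_mem hyΩ, Set.indicator_of_mem hyΩ]
                · rw [hHdef, Set.indicator_of_notMem hyΩ, Set.indicator_of_notMem hyΩ,
                    ENNReal.zero_rpow_of_pos hp0]
              have h2 : eLpNorm g' q (volume.restrict Ω) = eLpNorm g q (volume.restrict Ω) :=
                eLpNorm_congr_ae (ae_restrict_of_ae hgg'.symm)
              rw [hind, ← h2, eLpNorm_eq_lintegral_rpow_enorm_toReal hq0 hqt, hpdef]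
              rfl
    have heq : (1:ℝ) * ε * L = L * ε := by ring
    rw [heq]
    exact hmain
  refine ⟨key, ?_⟩
  intro hqt
  have hub : Tendsto (fun ε : ℝ => ENNReal.ofReal (1 * ε * L) * eLpNorm g q (volume.restrict Ω))
      (𝓝[>] (0:ℝ)) (𝓝 0) := by
    have h1 : Tendsto (fun ε : ℝ => ENNReal.ofReal (1 * ε * L)) (𝓝[>] (0:ℝ)) (𝓝 0) := by
      have h2 : Tendsto (fun ε : ℝ => 1 * ε * L) (𝓝 (0:ℝ)) (𝓝 (1 * 0 * L)) := by
        exact ((continuous_const.mul continuous_id).mul continuous_const).tendsto 0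
      have h3 : Tendsto (fun ε : ℝ => 1 * ε * L) (𝓝[>] (0:ℝ)) (𝓝 0) := by
        simpa using h2.mono_left nhdsWithin_le_nhds
      have h4 := (ENNReal.continuous_ofReal.tendsto 0).comp h3
      simpa [Function.comp_def] using h4
    have h5 := ENNReal.Tendsto.mul_const h1 (Or.inr hgq.ne)
    simpa using h5
  refine tendsto_of_tendsto_of_tendsto_of_le_of_le' tendsto_const_nhds hub ?_ ?_
  · exact Filter.Eventually.of_forall fun ε => zero_le
  · exact Filter.eventually_of_mem self_mem_nhdsWithin fun ε hε => key ε hε
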